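/- In the data center model, fix j ∈ {1,...,m} and consider two policies d and d' that agree in all components except d'_{n,j} = j and d_{n,j} > j. Then the generators and stationary distributions coincide, the reward vectors differ only in the (n,j) entry by f^{(d)}(n,j) − f^{(d')}(n,j) = −(d_{n,j} − j)(P_{2,W} − P_{2,S})C_1, and therefore the long-run average profit satisfies η^{d} = η^{d'} − π^{(d)}(n,j)(d_{n,j} − j)(P_{2,W} − P_{2,S})C_1. In particular, since P_{2,W} > P_{2,S} and C_1 > 0, η^{d} is strictly decreasing in d_{n,j} on {j, j+1, ..., m}. -/

import Mathlib

open Finset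

/-- Death rate of the data-center birth-death chain at state index `k`
(states `0..n` are `(k,0)`; states `n+1..n+m` are `(n, k-n)`). -/
noncomputable def dcDeath (n : ℕ) (μ1 μ2 : ℝ) (d : ℕ → ℕ) (k : ℕ) : ℝ :=
  if k ≤ n then (k : ℝ) * μ1
  else (n : ℝ) * μ1 + (min (d (k - n)) (k - n) : ℝ) * μ2

/-- Policy-dependent generator of the data-center birth-death chain. -/
noncomputable def dcGen (n m : ℕ) (lam μ1 μ2 : ℝ) (d : ℕ → ℕ) (k l : ℕ) : ℝ :=
  if l = k + 1 then lam
  else if l + 1 = k then dcDeath n μ1 μ2 d k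
  else if l = k then -((if k < n + m then lam else 0) + dcDeath n μ1 μ2 d k)
  else 0

/-- `π` is a stationary probability vector for the policy-`d` chain. -/
def dcStationary (n m : ℕ) (lam μ1 μ2 : ℝ) (d : ℕ → ℕ) (π : ℕ → ℝ) : Prop :=
  (∀ l ∈ Finset.range (n + m + 1),
    ∑ k ∈ Finset.range (n + m + 1), π k * dcGen n m lam μ1 μ2 d k l = 0) ∧
  (∑ k ∈ Finset.range (n + m + 1), π k = 1) ∧
  (∀ k ∈ Finset.range (n + m + 1), 0 ≤ π k)

/-- Reward (profit rate) function of the data center at state index `k`. -/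
noncomputable def dcReward (n m : ℕ) (lam μ1 μ2 R P1W P2W P2S C1 C21 C22 C3 C4 : ℝ)
    (d : ℕ → ℕ) (k : ℕ) : ℝ :=
  if k ≤ n then
    R * ((k : ℝ) * μ1) - ((n : ℝ) * P1W + (m : ℝ) * P2S) * C1 - (k : ℝ) * C21
  else
    R * ((n : ℝ) * μ1 + (min (k - n) (d (k - n)) : ℝ) * μ2)
      - ((n : ℝ) * P1W + (d (k - n) : ℝ) * P2W + ((m : ℝ) - (d (k - n) : ℝ)) * P2S) * C1
      - ((n : ℝ) * C21 + ((k - n : ℕ) : ℝ) * C22)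
      - (n : ℝ) * μ1 * C3
      - (if k - n = m then lam * C4 else 0)

/-- `g` solves the Poisson equation `B^{(d)} g = η e - f` for the policy-`d` chain. -/
def dcPoisson (n m : ℕ) (lam μ1 μ2 : ℝ) (d : ℕ → ℕ) (f : ℕ → ℝ) (η : ℝ)
    (g : ℕ → ℝ) : Prop :=
  ∀ k ∈ Finset.range (n + m + 1),
    ∑ l ∈ Finset.range (n + m + 1), dcGen n m lam μ1 μ2 d k l * g l = η - f k


lemma dcDeath_pos (n : ℕ) (hn : 1 ≤ n) (μ1 μ2 : ℝ) (hμ1 : 0 < μ1) (hμ2 : 0 < μ2)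
    (d : ℕ → ℕ) (k : ℕ) (hk : 1 ≤ k) : 0 < dcDeath n μ1 μ2 d k := by
  unfold dcDeath
  split_ifs with h
  · have : (1 : ℝ) ≤ (k : ℝ) := by exact_mod_cast hk
    nlinarith
  · have h1 : (1 : ℝ) ≤ (n : ℝ) := by exact_mod_cast hn
    have hkn : (n : ℝ) ≤ (k : ℝ) := by exact_mod_cast Nat.le_of_lt (Nat.lt_of_not_le h)
    have h2 : (0 : ℝ) ≤ min ((d (k - n) : ℕ) : ℝ) ((k : ℝ) - (n : ℝ)) :=
      le_min (by positivity) (by linarith)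
    nlinarith

lemma dc_balance (n m : ℕ) (lam μ1 μ2 : ℝ) (d : ℕ → ℕ) (π : ℕ → ℝ)
    (hπ : dcStationary n m lam μ1 μ2 d π) (hN : 1 ≤ n + m) :
    ∀ k, k < n + m → lam * π k = dcDeath n μ1 μ2 d (k + 1) * π (k + 1) := by
  intro k
  induction k with
  | zero =>
    intro hk
    have h0 := hπ.1 0 (by simp)
    have hsub : ({0, 1} : Finset ℕ) ⊆ Finset.range (n + m + 1) := by
      intro x hx; simp at hx; simp; omega
    have hzero : ∀ x ∈ Finset.range (n + m + 1), x ∉ ({0, 1} : Finset ℕ) →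
        π x * dcGen n m lam μ1 μ2 d x 0 = 0 := by
      intro x hx hx'
      simp at hx'
      have : dcGen n m lam μ1 μ2 d x 0 = 0 := by
        unfold dcGen; split_ifs <;> first | rfl | omega | simp_all
      rw [this, mul_zero]
    rw [← Finset.sum_subset hsub hzero, Finset.sum_pair (by norm_num)] at h0
    have e00 : dcGen n m lam μ1 μ2 d 0 0 = -lam := by
      have h : 0 < n + m := hN
      simp [dcGen, dcDeath, h]
    have e10 : dcGen n m lam μ1 μ2 d 1 0 = dcDeath n μ1 μ2 d 1 := by
      unfold dcGen; norm_num
    rw [e00, e10] at h0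
    linarith
  | succ k ih =>
    intro hk
    have ihk := ih (by omega)
    have h1 := hπ.1 (k + 1) (by simp; omega)
    have hsub : ({k, k + 1, k + 2} : Finset ℕ) ⊆ Finset.range (n + m + 1) := by
      intro x hx; simp at hx; simp; omega
    have hzero : ∀ x ∈ Finset.range (n + m + 1), x ∉ ({k, k + 1, k + 2} : Finset ℕ) →
        π x * dcGen n m lam μ1 μ2 d x (k + 1) = 0 := by
      intro x hx hx'
      simp at hx'
      have : dcGen n m lam μ1 μ2 d x (k + 1) = 0 := by
        unfold dcGen; split_ifs <;> first | rfl | omega | simp_all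
      rw [this, mul_zero]
    rw [← Finset.sum_subset hsub hzero] at h1
    have hne1 : (k : ℕ) ∉ ({k + 1, k + 2} : Finset ℕ) := by simp
    have hne2 : (k + 1 : ℕ) ∉ ({k + 2} : Finset ℕ) := by simp
    rw [show ({k, k + 1, k + 2} : Finset ℕ) = insert k (insert (k+1) {k+2}) from rfl,
      Finset.sum_insert hne1, Finset.sum_insert hne2, Finset.sum_singleton] at h1
    have e1 : dcGen n m lam μ1 μ2 d k (k + 1) = lam := by unfold dcGen; simp
    have e2 : dcGen n m lam μ1 μ2 d (k + 1) (k + 1)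
        = -(lam + dcDeath n μ1 μ2 d (k + 1)) := by
      have h : k + 1 < n + m := hk
      simp [dcGen, h]
    have e3 : dcGen n m lam μ1 μ2 d (k + 2) (k + 1) = dcDeath n μ1 μ2 d (k + 2) := by
      simp [dcGen]
    rw [e1, e2, e3] at h1
    linarith

/-- if `d` and `d'` agree except `d'_{n,j} = j < d_{n,j}`, the
generators and stationary distributions coincide, the rewards differ only at
state `(n,j)` by `−(d_{n,j}−j)(P_{2,W}−P_{2,S})C₁`, hence
`η^d = η^{d'} − π^{(d)}(n,j)(d_{n,j}−j)(P_{2,W}−P_{2,S})C₁ < η^{d'}`. -/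
theorem stmt6 (n m : ℕ) (hn : 1 ≤ n) (hm : 1 ≤ m)
    (lam μ1 μ2 R P1W P2W P2S C1 C21 C22 C3 C4 : ℝ)
    (hlam : 0 < lam) (hμ1 : 0 < μ1) (hμ2 : 0 < μ2)
    (hP2S : 0 < P2S) (hP : P2S < P2W) (hC1 : 0 < C1)
    (hR : 0 ≤ R) (hC21 : 0 ≤ C21) (hC22 : 0 ≤ C22) (hC3 : 0 ≤ C3) (hC4 : 0 ≤ C4)
    (j0 : ℕ) (hj1 : 1 ≤ j0) (hj2 : j0 ≤ m)
    (d d' : ℕ → ℕ) (hd : ∀ j, d j ≤ m) (hd' : ∀ j, d' j ≤ m)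
    (hagree : ∀ j, j ≠ j0 → d j = d' j)
    (hd'j : d' j0 = j0) (hdj : j0 < d j0)
    (π π' : ℕ → ℝ)
    (hπ : dcStationary n m lam μ1 μ2 d π)
    (hπ' : dcStationary n m lam μ1 μ2 d' π')
    (η η' : ℝ)
    (hη : η = ∑ k ∈ Finset.range (n + m + 1),
      π k * dcReward n m lam μ1 μ2 R P1W P2W P2S C1 C21 C22 C3 C4 d k)
    (hη' : η' = ∑ k ∈ Finset.range (n + m + 1),
      π' k * dcReward n m lam μ1 μ2 R P1W P2W P2S C1 C21 C22 C3 C4 d' k) :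
    (∀ k l, dcGen n m lam μ1 μ2 d k l = dcGen n m lam μ1 μ2 d' k l) ∧
    (dcReward n m lam μ1 μ2 R P1W P2W P2S C1 C21 C22 C3 C4 d (n + j0)
        - dcReward n m lam μ1 μ2 R P1W P2W P2S C1 C21 C22 C3 C4 d' (n + j0)
      = -(((d j0 : ℝ) - (j0 : ℝ)) * (P2W - P2S) * C1)) ∧
    (∀ k ∈ Finset.range (n + m + 1), k ≠ n + j0 →
      dcReward n m lam μ1 μ2 R P1W P2W P2S C1 C21 C22 C3 C4 d k
        = dcReward n m lam μ1 μ2 R P1W P2W P2S C1 C21 C22 C3 C4 d' k) ∧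
    η = η' - π (n + j0) * ((d j0 : ℝ) - (j0 : ℝ)) * (P2W - P2S) * C1 ∧
    η < η' := by
  have hN : 1 ≤ n + m := by omega
  -- generators coincide
  have hdeath : ∀ k, dcDeath n μ1 μ2 d k = dcDeath n μ1 μ2 d' k := by
    intro k
    unfold dcDeath
    split_ifs with h
    · rfl
    · by_cases hk : k - n = j0
      · have hkn : k = n + j0 := by omega
        subst hkn
        have ekn : n + j0 - n = j0 := by omega
        rw [ekn, hd'j]
        have e1 : ((n + j0 : ℕ) : ℝ) - (n : ℝ) = (j0 : ℝ) := by push_cast; ring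
        rw [e1]
        have e2 : min ((d j0 : ℕ) : ℝ) ((j0 : ℝ)) = (j0 : ℝ) :=
          min_eq_right (by exact_mod_cast hdj.le)
        rw [e2, min_self]
      · rw [hagree _ hk]
  have hgen : ∀ k l, dcGen n m lam μ1 μ2 d k l = dcGen n m lam μ1 μ2 d' k l := by
    intro k l; unfold dcGen; rw [hdeath]
  -- π' is stationary for the d-chain as well
  have hπ'd : dcStationary n m lam μ1 μ2 d π' := by
    obtain ⟨h1, h2, h3⟩ := hπ'
    refine ⟨fun l hl => ?_, h2, h3⟩
    simp only [hgen]
    exact h1 l hl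
  have db := dc_balance n m lam μ1 μ2 d π hπ hN
  have db' := dc_balance n m lam μ1 μ2 d π' hπ'd hN
  have hν : ∀ k, 1 ≤ k → 0 < dcDeath n μ1 μ2 d k :=
    dcDeath_pos n hn μ1 μ2 hμ1 hμ2 d
  have hrec : ∀ k, k < n + m →
      π (k + 1) = lam * π k / dcDeath n μ1 μ2 d (k + 1) := by
    intro k hk
    rw [eq_div_iff (ne_of_gt (hν (k + 1) (by omega)))]
    linarith [db k hk]
  have hrec' : ∀ k, k < n + m →
      π' (k + 1) = lam * π' k / dcDeath n μ1 μ2 d (k + 1) := by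
    intro k hk
    rw [eq_div_iff (ne_of_gt (hν (k + 1) (by omega)))]
    linarith [db' k hk]
  have hpos0 : 0 < π 0 := by
    rcases (hπ.2.2 0 (by simp)).lt_or_eq with h | h
    · exact h
    · exfalso
      have hall : ∀ k, k ≤ n + m → π k = 0 := by
        intro k
        induction k with
        | zero => intro _; exact h.symm
        | succ k ih =>
          intro hk
          rw [hrec k (by omega), ih (by omega), mul_zero, zero_div]
      have : (∑ k ∈ Finset.range (n + m + 1), π k) = 0 :=
        Finset.sum_eq_zero fun k hk => hall k (by simp at hk; omega)
      rw [hπ.2.1] at this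
      norm_num at this
  have hposall : ∀ k, k ≤ n + m → 0 < π k := by
    intro k
    induction k with
    | zero => intro _; exact hpos0
    | succ k ih =>
      intro hk
      rw [hrec k (by omega)]
      have h1 := ih (by omega)
      have h2 := hν (k + 1) (by omega)
      positivity
  have hcross : ∀ k, k ≤ n + m → π' 0 * π k = π 0 * π' k := by
    intro k
    induction k with
    | zero => intro _; ring
    | succ k ih =>
      intro hk
      rw [hrec k (by omega), hrec' k (by omega)]
      have ihk := ih (by omega)
      have hνne : dcDeath n μ1 μ2 d (k + 1) ≠ 0 := ne_of_gt (hν (k + 1) (by omega))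
      field_simp
      linear_combination ihk
  have h00 : π 0 = π' 0 := by
    have key : π 0 * (∑ k ∈ Finset.range (n + m + 1), π' k)
        = π' 0 * (∑ k ∈ Finset.range (n + m + 1), π k) := by
      rw [Finset.mul_sum, Finset.mul_sum]
      exact Finset.sum_congr rfl fun k hk => (hcross k (by simp at hk; omega)).symm
    rw [hπ.2.1, hπ'.2.1, mul_one, mul_one] at key
    exact key
  have hππ' : ∀ k, k ≤ n + m → π k = π' k := by
    intro k hk
    have h := hcross k hk
    rw [← h00] at h
    exact mul_left_cancel₀ (ne_of_gt hpos0) h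
  -- reward difference at n + j0
  have hrewdiff : dcReward n m lam μ1 μ2 R P1W P2W P2S C1 C21 C22 C3 C4 d (n + j0)
      - dcReward n m lam μ1 μ2 R P1W P2W P2S C1 C21 C22 C3 C4 d' (n + j0)
      = -(((d j0 : ℝ) - (j0 : ℝ)) * (P2W - P2S) * C1) := by
    have hne : ¬ (n + j0 ≤ n) := by omega
    have ekn : n + j0 - n = j0 := by omega
    simp only [dcReward, if_neg hne, ekn, hd'j]
    have e1 : ((n + j0 : ℕ) : ℝ) - (n : ℝ) = (j0 : ℝ) := by push_cast; ring
    rw [e1]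
    have e2 : min ((j0 : ℝ)) ((d j0 : ℕ) : ℝ) = (j0 : ℝ) :=
      min_eq_left (by exact_mod_cast hdj.le)
    rw [e2, min_self]
    ring
  -- rewards agree away from n + j0
  have hreweq : ∀ k ∈ Finset.range (n + m + 1), k ≠ n + j0 →
      dcReward n m lam μ1 μ2 R P1W P2W P2S C1 C21 C22 C3 C4 d k
        = dcReward n m lam μ1 μ2 R P1W P2W P2S C1 C21 C22 C3 C4 d' k := by
    intro k hk hkne
    by_cases hkn : k ≤ n
    · simp only [dcReward, if_pos hkn]
    · have hj : k - n ≠ j0 := by omega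
      simp only [dcReward, if_neg hkn, hagree _ hj]
  -- the η identity
  have hsum1 : (∑ k ∈ Finset.range (n + m + 1),
      π k * dcReward n m lam μ1 μ2 R P1W P2W P2S C1 C21 C22 C3 C4 d' k) = η' := by
    rw [hη']
    exact Finset.sum_congr rfl fun k hk => by
      rw [hππ' k (by simp at hk; omega)]
  have hdelta : η - (∑ k ∈ Finset.range (n + m + 1),
      π k * dcReward n m lam μ1 μ2 R P1W P2W P2S C1 C21 C22 C3 C4 d' k)
      = π (n + j0) * (-(((d j0 : ℝ) - (j0 : ℝ)) * (P2W - P2S) * C1)) := by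
    rw [hη, ← Finset.sum_sub_distrib, ← hrewdiff]
    rw [Finset.sum_eq_single (n + j0)]
    · ring
    · intro b hb hbne
      rw [hreweq b hb hbne]
      ring
    · intro hmem
      exact absurd (by simp; omega) hmem
  have hmain : η = η' - π (n + j0) * ((d j0 : ℝ) - (j0 : ℝ)) * (P2W - P2S) * C1 := by
    linear_combination hdelta + hsum1
  refine ⟨hgen, hrewdiff, hreweq, hmain, ?_⟩
  have hp1 : 0 < π (n + j0) := hposall (n + j0) (by omega)
  have hp2 : (0 : ℝ) < (d j0 : ℝ) - (j0 : ℝ) := by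
    have : (j0 : ℝ) < (d j0 : ℝ) := by exact_mod_cast hdj
    linarith
  have hp3 : (0 : ℝ) < P2W - P2S := by linarith
  have := mul_pos (mul_pos (mul_pos hp1 hp2) hp3) hC1
  linarith
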